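/- Let π : C → D be a Galois covering of Hom-finite triangulated categories (D = C/G) and let T̄ be a cluster-tilting object in D (meaning Hom(T̄, T̄[1]) = 0 and any X with Hom(T̄, X[1]) = 0 lies in add T̄). Then the orbit lift T of T̄ in C is a cluster-tilting object in C. -/

import Mathlib

open CategoryTheory Limits

/-- `X` belongs to `add T`: it is a direct summand of a finite direct sum of
copies of `T`. -/
def MemAdd {C : Type*} [Category C] [Preadditive C] [HasFiniteBiproducts C]
    (X T : C) : Prop :=
  ∃ (n : ℕ) (s : X ⟶ ⨁ (fun _ : Fin n => T)) (r : (⨁ (fun _ : Fin n => T)) ⟶ X),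
    s ≫ r = 𝟙 X

/-- `T` is a cluster-tilting object of the 2-CY triangulated category `C`:
`Hom(T, T[1]) = 0` and every `X` with `Hom(T, X[1]) = 0` lies in `add T`. -/
def IsClusterTilting {C : Type*} [Category C] [Preadditive C] [HasShift C ℤ]
    [HasFiniteBiproducts C] (T : C) : Prop :=
  (∀ f : T ⟶ T⟦(1 : ℤ)⟧, f = 0) ∧
  ∀ X : C, (∀ f : T ⟶ X⟦(1 : ℤ)⟧, f = 0) → MemAdd X T

section Aux

variable {C : Type*} [Category C] [Preadditive C] [HasFiniteBiproducts C]

/-- The additive submonoid of morphisms `X ⟶ Y` that are finite sums of morphisms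
factoring through `T`. -/
def sumThrough (T X Y : C) : AddSubmonoid (X ⟶ Y) where
  carrier := {f | ∃ (N : ℕ) (a : Fin N → (X ⟶ T)) (b : Fin N → (T ⟶ Y)),
    ∑ i, a i ≫ b i = f}
  zero_mem' := ⟨0, Fin.elim0, Fin.elim0, by simp⟩
  add_mem' := by
    rintro f g ⟨N₁, a₁, b₁, rfl⟩ ⟨N₂, a₂, b₂, rfl⟩
    refine ⟨N₁ + N₂, Fin.append a₁ a₂, Fin.append b₁ b₂, ?_⟩
    rw [Fin.sum_univ_add]
    simp

lemma factor_mem_sumThrough {T X Y : C} (a : X ⟶ T) (b : T ⟶ Y) :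
    a ≫ b ∈ sumThrough T X Y :=
  ⟨1, fun _ => a, fun _ => b, by simp⟩

lemma comp_mem_sumThrough {T Z : C} (h : MemAdd Z T) {X Y : C} (u : X ⟶ Z) (v : Z ⟶ Y) :
    u ≫ v ∈ sumThrough T X Y := by
  obtain ⟨n, s, r, hsr⟩ := h
  have key : u ≫ v = ∑ j : Fin n,
      (u ≫ s ≫ biproduct.π (fun _ : Fin n => T) j) ≫
        (biproduct.ι (fun _ : Fin n => T) j ≫ r ≫ v) := by
    calc u ≫ v = (u ≫ s) ≫ 𝟙 (⨁ fun _ : Fin n => T) ≫ (r ≫ v) := by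
          simp only [Category.id_comp, Category.assoc]
          rw [← Category.assoc s r v, hsr, Category.id_comp]
    _ = (u ≫ s) ≫ (∑ j : Fin n, biproduct.π (fun _ : Fin n => T) j ≫
          biproduct.ι (fun _ : Fin n => T) j) ≫ (r ≫ v) := by rw [biproduct.total]
    _ = ∑ j : Fin n, (u ≫ s ≫ biproduct.π (fun _ : Fin n => T) j) ≫
          (biproduct.ι (fun _ : Fin n => T) j ≫ r ≫ v) := by
          rw [Preadditive.sum_comp, Preadditive.comp_sum]
          simp only [Category.assoc]
  rw [key]
  exact AddSubmonoid.sum_mem _ fun j _ => factor_mem_sumThrough _ _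

lemma memAdd_of_id_mem {T X : C} (h : 𝟙 X ∈ sumThrough T X X) : MemAdd X T := by
  obtain ⟨N, a, b, hab⟩ := h
  exact ⟨N, biproduct.lift a, biproduct.desc b, by rw [biproduct.lift_desc]; exact hab⟩

lemma memAdd_of_iso {T X Z : C} (w : X ≅ Z) (h : MemAdd Z T) : MemAdd X T := by
  obtain ⟨n, s, r, hsr⟩ := h
  refine ⟨n, w.hom ≫ s, r ≫ w.inv, ?_⟩
  rw [Category.assoc, ← Category.assoc s, hsr, Category.id_comp, Iso.hom_inv_id]

lemma hom_zero_of_memAdd {T Z W : C} (h : MemAdd Z T) (hT : ∀ f : T ⟶ W, f = 0)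
    (g : Z ⟶ W) : g = 0 := by
  obtain ⟨n, s, r, hsr⟩ := h
  have hr : r ≫ g = 0 := by
    apply biproduct.hom_ext'
    intro j
    rw [comp_zero]
    exact hT _
  calc g = (s ≫ r) ≫ g := by rw [hsr, Category.id_comp]
  _ = s ≫ (r ≫ g) := Category.assoc _ _ _
  _ = 0 := by rw [hr, comp_zero]

lemma shiftFunctor_additive (D : Type*) [Category D] [Preadditive D]
    [HasFiniteBiproducts D] [HasShift D ℤ] (n : ℤ) : (shiftFunctor D n).Additive := by
  haveI : HasBinaryBiproducts D := hasBinaryBiproducts_of_finite_biproducts D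
  haveI := preservesBinaryBiproducts_of_preservesBinaryProducts (shiftFunctor D n)
  exact Functor.additive_of_preservesBinaryBiproducts _

end Aux

lemma hom_to_shift_biproduct_zero {D : Type*} [Category D] [Preadditive D]
    [HasFiniteBiproducts D] [HasShift D ℤ] {Tbar : D}
    (h : ∀ f : Tbar ⟶ Tbar⟦(1:ℤ)⟧, f = 0) (n : ℕ)
    (g : Tbar ⟶ (⨁ fun _ : Fin n => Tbar)⟦(1:ℤ)⟧) : g = 0 := by
  haveI := shiftFunctor_additive D (1:ℤ)
  have hid : 𝟙 ((⨁ fun _ : Fin n => Tbar)⟦(1:ℤ)⟧) =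
      ∑ j : Fin n, (biproduct.π (fun _ : Fin n => Tbar) j)⟦(1:ℤ)⟧' ≫
        (biproduct.ι (fun _ : Fin n => Tbar) j)⟦(1:ℤ)⟧' := by
    rw [← CategoryTheory.Functor.map_id (shiftFunctor D (1:ℤ)), ← biproduct.total, Functor.map_sum]
    simp only [Functor.map_comp]
  calc g = g ≫ 𝟙 _ := (Category.comp_id g).symm
  _ = ∑ j : Fin n, (g ≫ (biproduct.π (fun _ : Fin n => Tbar) j)⟦(1:ℤ)⟧') ≫
        (biproduct.ι (fun _ : Fin n => Tbar) j)⟦(1:ℤ)⟧' := by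
      rw [hid, Preadditive.comp_sum]; simp only [Category.assoc]
  _ = 0 := Finset.sum_eq_zero fun j _ => by rw [h (g ≫ _), zero_comp]

/-- Let `π : C ⥤ D` be a Galois covering of Hom-finite triangulated (here: additive
with shift) categories, with group `G` acting on `C` by autoequivalences `act g`
commuting with `π`, the fibres `fib A` enumerating the `G`-orbit of objects over `A`,
and `π` inducing bijections `⊕_{Y ∈ π⁻¹(A)} C(X, Y) ≅ D(πX, A)` and
`⊕_{Y ∈ π⁻¹(A)} C(Y, X) ≅ D(A, πX)`. If `T̄` is a cluster-tilting object of `D`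
and `T` is the orbit lift of `T̄` (so `π(T)` is a finite direct sum of copies of `T̄`,
every lift of `T̄` is a summand of `T`, and `T` is `G`-invariant), then `T` is a
cluster-tilting object of `C`. -/
theorem clusterTilting_lift {C D : Type*} [Category C] [Category D]
    [Preadditive C] [Preadditive D] [HasShift C ℤ] [HasShift D ℤ]
    [HasFiniteBiproducts C] [HasFiniteBiproducts D]
    (π : C ⥤ D) [π.Additive] [π.CommShift ℤ]
    {G : Type*} [Group G] (act : G → C ⥤ C)
    (hact : ∀ g : G, (act g).IsEquivalence)
    (hcomm : ∀ g : G, Nonempty (act g ⋙ π ≅ π))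
    {ι : Type*} [DecidableEq ι]
    (fib : D → ι → C) (e : ∀ (A : D) (i : ι), π.obj (fib A i) ≅ A)
    (hfib : ∀ Y : C, ∃ (A : D) (i : ι), Nonempty (Y ≅ fib A i))
    (horb : ∀ (A : D) (i j : ι), ∃ g : G, Nonempty ((act g).obj (fib A i) ≅ fib A j))
    (hcov : ∀ (X : C) (A : D), Function.Bijective
      (DFinsupp.sumAddHom (β := fun i : ι => X ⟶ fib A i)
        (fun i => ((Preadditive.rightComp (π.obj X) (e A i).hom).comp π.mapAddHom))))
    (hcov' : ∀ (X : C) (A : D), Function.Bijective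
      (DFinsupp.sumAddHom (β := fun i : ι => fib A i ⟶ X)
        (fun i => ((Preadditive.leftComp (π.obj X) (e A i).inv).comp π.mapAddHom))))
    (Tbar : D) (hTbar : IsClusterTilting Tbar)
    (T : C)
    (hT₁ : ∃ n : ℕ, Nonempty (π.obj T ≅ ⨁ (fun _ : Fin n => Tbar)))
    (hT₂ : ∀ Y : C, Nonempty (π.obj Y ≅ Tbar) → MemAdd Y T)
    (hT₃ : ∀ g : G, Nonempty ((act g).obj T ≅ T)) :
    IsClusterTilting T := by
  classical
  have φapp : ∀ (Y : C) (A : D) (j : ι) (x : Y ⟶ fib A j),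
      ((Preadditive.rightComp (π.obj Y) (e A j).hom).comp π.mapAddHom) x
        = π.map x ≫ (e A j).hom := fun _ _ _ _ => rfl
  constructor
  · -- Hom(T, T⟦1⟧) = 0
    intro f
    obtain ⟨A, i, ⟨w⟩⟩ := hfib (T⟦(1 : ℤ)⟧)
    obtain ⟨n, ⟨m⟩⟩ := hT₁
    have hmem : MemAdd (π.obj T) Tbar := ⟨n, m.hom, m.inv, m.hom_inv_id⟩
    have hTbarA : ∀ g : Tbar ⟶ A, g = 0 := by
      intro g
      have E : A ≅ (⨁ fun _ : Fin n => Tbar)⟦(1 : ℤ)⟧ :=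
        (e A i).symm ≪≫ π.mapIso w.symm ≪≫ (π.commShiftIso (1 : ℤ)).app T ≪≫
          (shiftFunctor D (1 : ℤ)).mapIso m
      have h1 : g ≫ E.hom = 0 := hom_to_shift_biproduct_zero hTbar.1 n _
      calc g = (g ≫ E.hom) ≫ E.inv := by
            rw [Category.assoc, Iso.hom_inv_id, Category.comp_id]
      _ = 0 := by rw [h1, zero_comp]
    have hzero : π.map (f ≫ w.hom) ≫ (e A i).hom = 0 :=
      hom_zero_of_memAdd hmem hTbarA _
    have h3 : DFinsupp.single (β := fun j : ι => T ⟶ fib A j) i (f ≫ w.hom) = 0 := by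
      apply (hcov T A).1
      rw [map_zero, DFinsupp.sumAddHom_single]
      exact hzero
    have h4 : f ≫ w.hom = 0 := by
      have := DFunLike.congr_fun h3 i
      simpa using this
    calc f = (f ≫ w.hom) ≫ w.inv := by
          rw [Category.assoc, Iso.hom_inv_id, Category.comp_id]
    _ = 0 := by rw [h4, zero_comp]
  · -- second condition
    intro X hX
    obtain ⟨A₀, i₀, ⟨w⟩⟩ := hfib X
    have hX' : ∀ f : T ⟶ (fib A₀ i₀)⟦(1 : ℤ)⟧, f = 0 := by
      intro f
      have h0 : f ≫ ((shiftFunctor C (1 : ℤ)).mapIso w).inv = 0 := hX _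
      calc f = (f ≫ ((shiftFunctor C (1 : ℤ)).mapIso w).inv) ≫
            ((shiftFunctor C (1 : ℤ)).mapIso w).hom := by
            rw [Category.assoc, Iso.inv_hom_id, Category.comp_id]
      _ = 0 := by rw [h0, zero_comp]
    refine memAdd_of_iso w ?_
    have hfibT : ∀ (i : ι) (W : C), (∀ f : T ⟶ W, f = 0) → ∀ g : fib Tbar i ⟶ W, g = 0 :=
      fun i W hW g => hom_zero_of_memAdd (hT₂ _ ⟨e Tbar i⟩) hW g
    have hA₀ : ∀ f : Tbar ⟶ A₀⟦(1 : ℤ)⟧, f = 0 := by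
      intro f
      have E : A₀⟦(1 : ℤ)⟧ ≅ π.obj ((fib A₀ i₀)⟦(1 : ℤ)⟧) :=
        (shiftFunctor D (1 : ℤ)).mapIso (e A₀ i₀).symm ≪≫
          ((π.commShiftIso (1 : ℤ)).app (fib A₀ i₀)).symm
      obtain ⟨d, hd⟩ := (hcov' ((fib A₀ i₀)⟦(1 : ℤ)⟧) Tbar).2 (f ≫ E.hom)
      have hd0 : d = 0 := by
        refine DFinsupp.ext fun i => ?_
        simpa using hfibT i _ hX' (d i)
      rw [hd0, map_zero] at hd
      calc f = (f ≫ E.hom) ≫ E.inv := by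
            rw [Category.assoc, Iso.hom_inv_id, Category.comp_id]
      _ = 0 := by rw [← hd, zero_comp]
    obtain ⟨n, s, r, hsr⟩ := hTbar.2 A₀ hA₀
    have key : ∀ (p : π.obj (fib A₀ i₀) ⟶ Tbar) (q : Tbar ⟶ A₀),
        ∃ d : Π₀ j : ι, (fib A₀ i₀ ⟶ fib A₀ j),
          DFinsupp.sumAddHom (fun j =>
            ((Preadditive.rightComp (π.obj (fib A₀ i₀)) (e A₀ j).hom).comp π.mapAddHom)) d
            = p ≫ q ∧
          ∀ j, d j ∈ sumThrough T (fib A₀ i₀) (fib A₀ j) := by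
      intro p q
      obtain ⟨a, ha⟩ := (hcov (fib A₀ i₀) Tbar).2 p
      choose b hb using fun i : ι => (hcov (fib Tbar i) A₀).2 ((e Tbar i).hom ≫ q)
      refine ⟨a.sum fun i ai =>
        DFinsupp.mapRange (fun j x => ai ≫ x) (fun j => comp_zero) (b i), ?_, ?_⟩
      · rw [map_dfinsuppSum]
        have hterm : ∀ (i : ι) (ai : fib A₀ i₀ ⟶ fib Tbar i),
            DFinsupp.sumAddHom (fun j =>
              ((Preadditive.rightComp (π.obj (fib A₀ i₀)) (e A₀ j).hom).comp π.mapAddHom))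
              (DFinsupp.mapRange (fun j x => ai ≫ x) (fun j => comp_zero) (b i))
            = π.map ai ≫ ((e Tbar i).hom ≫ q) := by
          intro i ai
          rw [DFinsupp.sumAddHom_apply, DFinsupp.sum_mapRange_index (fun j => map_zero _)]
          rw [← hb i, DFinsupp.sumAddHom_apply, DFinsupp.sum, DFinsupp.sum,
            Preadditive.comp_sum]
          refine Finset.sum_congr rfl fun j hj => ?_
          simp only [φapp]
          rw [Functor.map_comp, Category.assoc]
        simp_rw [hterm]
        rw [← ha, DFinsupp.sumAddHom_apply, DFinsupp.sum, DFinsupp.sum,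
          Preadditive.sum_comp]
        refine Finset.sum_congr rfl fun i hi => ?_
        simp only [φapp, Category.assoc]
      · intro j
        rw [DFinsupp.sum_apply, DFinsupp.sum]
        refine AddSubmonoid.sum_mem _ fun i _ => ?_
        rw [DFinsupp.mapRange_apply]
        exact comp_mem_sumThrough (hT₂ _ ⟨e Tbar i⟩) _ _
    have hdecomp : (e A₀ i₀).hom = ∑ k : Fin n,
        ((e A₀ i₀).hom ≫ s ≫ biproduct.π (fun _ : Fin n => Tbar) k) ≫
          (biproduct.ι (fun _ : Fin n => Tbar) k ≫ r) := by
      have h1 : (e A₀ i₀).hom = ((e A₀ i₀).hom ≫ s) ≫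
          𝟙 (⨁ fun _ : Fin n => Tbar) ≫ r := by
        simp only [Category.id_comp, Category.assoc]
        rw [hsr, Category.comp_id]
      conv_lhs => rw [h1, ← biproduct.total]
      rw [Preadditive.sum_comp, Preadditive.comp_sum]
      refine Finset.sum_congr rfl fun k hk => ?_
      simp only [Category.assoc]
    choose dk hdk1 hdk2 using fun k : Fin n =>
      key ((e A₀ i₀).hom ≫ s ≫ biproduct.π (fun _ : Fin n => Tbar) k)
        (biproduct.ι (fun _ : Fin n => Tbar) k ≫ r)
    have heq : DFinsupp.single (β := fun j : ι => fib A₀ i₀ ⟶ fib A₀ j) i₀ (𝟙 (fib A₀ i₀)) = ∑ k : Fin n, dk k := by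
      apply (hcov (fib A₀ i₀) A₀).1
      rw [map_sum, DFinsupp.sumAddHom_single]
      simp_rw [hdk1]
      rw [← hdecomp]
      show π.map (𝟙 _) ≫ (e A₀ i₀).hom = (e A₀ i₀).hom
      rw [CategoryTheory.Functor.map_id, Category.id_comp]
    apply memAdd_of_id_mem (T := T)
    have h5 := DFunLike.congr_fun heq i₀
    simp only [DFinsupp.single_eq_same, DFinsupp.finset_sum_apply] at h5
    rw [h5]
    exact AddSubmonoid.sum_mem _ fun k _ => hdk2 k i₀
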